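/- If the bias sequence satisfies f(n) = a/n + b/n² + O(1/n³) as n → ∞, then the jackknife bias estimate satisfies (n−1)·(f(n−1) − f(n)) = a/n + O(1/n²) = f(n) + O(1/n²) as n → ∞; that is, the expected value of the jackknife bias estimate B̂_J[θ̂_n] = (n−1)(θ̄ᴶ_n − θ̂_n) equals the true bias f(n) up to an error of order O(1/n²). -/

import Mathlib

open Filter Asymptotics

theorem stmt9 (a b : ℝ) (f : ℕ → ℝ)
    (hf : (fun n : ℕ => f n - (a / (n : ℝ) + b / (n : ℝ) ^ 2))
        =O[atTop] fun n : ℕ => 1 / (n : ℝ) ^ 3) :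
    ((fun n : ℕ => ((n : ℝ) - 1) * (f (n - 1) - f n) - a / (n : ℝ))
        =O[atTop] fun n : ℕ => 1 / (n : ℝ) ^ 2) ∧
    ((fun n : ℕ => ((n : ℝ) - 1) * (f (n - 1) - f n) - f n)
        =O[atTop] fun n : ℕ => 1 / (n : ℝ) ^ 2) := by
  obtain ⟨C, hC⟩ := isBigO_iff.mp hf
  obtain ⟨N, hN⟩ := eventually_atTop.mp hC
  set C' : ℝ := max C 0 with hC'def
  have hC0 : 0 ≤ C' := le_max_right _ _
  have hbound : ∀ n : ℕ, N ≤ n → 1 ≤ n → |f n - (a / n + b / (n:ℝ)^2)| ≤ C' / (n:ℝ)^3 := by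
    intro n hn hn1
    have hx : (0:ℝ) < (n:ℝ) := by exact_mod_cast hn1
    have h := hN n hn
    rw [Real.norm_eq_abs, norm_div, norm_one, norm_pow, Real.norm_natCast] at h
    calc |f n - (a / n + b / (n:ℝ)^2)| ≤ C * (1 / (n:ℝ)^3) := h
      _ ≤ C' * (1 / (n:ℝ)^3) := by
          have : (0:ℝ) ≤ 1 / (n:ℝ)^3 := by positivity
          exact mul_le_mul_of_nonneg_right (le_max_left _ _) this
      _ = C' / (n:ℝ)^3 := by ring
  have h1 : (fun n : ℕ => ((n : ℝ) - 1) * (f (n - 1) - f n) - a / (n : ℝ))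
      =O[atTop] fun n : ℕ => 1 / (n : ℝ) ^ 2 := by
    rw [isBigO_iff]
    refine ⟨5 * C' + 4 * |b|, ?_⟩
    filter_upwards [eventually_ge_atTop (max N 2 + 1)] with n hn
    set m : ℕ := n - 1 with hmdef
    have hmN : max N 2 ≤ m := Nat.le_sub_one_of_lt (Nat.lt_of_lt_of_le (Nat.lt_succ_self _) hn)
    have hm2 : 2 ≤ m := le_trans (le_max_right _ _) hmN
    have hmNN : N ≤ m := le_trans (le_max_left _ _) hmN
    have hnN : N ≤ n := le_trans hmNN (Nat.sub_le n 1)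
    have hn1 : 1 ≤ n := le_trans (by omega) hn
    set x : ℝ := (n : ℝ) with hxdef
    have hy : (m : ℝ) = x - 1 := by
      rw [hmdef, hxdef, Nat.cast_sub hn1]; simp
    have hx3 : (3:ℝ) ≤ x := by
      rw [hxdef]; exact_mod_cast (show (3:ℕ) ≤ n by omega)
    have hx0 : (0:ℝ) < x := by linarith
    have hy2 : (2:ℝ) ≤ x - 1 := by
      rw [← hy]; exact_mod_cast hm2
    have hy0 : (0:ℝ) < x - 1 := by linarith
    have hgm := hbound m hmNN (by omega)
    have hgn := hbound n hnN hn1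
    rw [hy] at hgm
    rw [← hxdef] at hgn
    have key : (x - 1) * (f m - f n) - a / x
        = (x - 1) * (f m - (a / (x-1) + b / (x-1)^2))
          - (x - 1) * (f n - (a / x + b / x^2))
          + b * (x + (x-1)) / ((x-1) * x^2) := by
      have hx0' : x ≠ 0 := ne_of_gt hx0
      have hx1 : x - 1 ≠ 0 := ne_of_gt hy0
      field_simp
      ring
    rw [Real.norm_eq_abs, key]
    set e1 : ℝ := f m - (a / (x-1) + b / (x-1)^2) with he1
    set e2 : ℝ := f n - (a / x + b / x^2) with he2
    have t1 : (x - 1) * |e1| ≤ 4 * C' / x^2 := by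
      calc (x - 1) * |e1| ≤ (x - 1) * (C' / (x-1)^3) :=
            mul_le_mul_of_nonneg_left hgm (le_of_lt hy0)
        _ = C' / (x-1)^2 := by
            field_simp
        _ ≤ 4 * C' / x^2 := by
            rw [div_le_div_iff₀ (by positivity) (by positivity)]
            nlinarith [hy2, hx3, mul_nonneg hC0 (sq_nonneg (x - 2*(x-1)))]
    have t2 : (x - 1) * |e2| ≤ C' / x^2 := by
      calc (x - 1) * |e2| ≤ (x - 1) * (C' / x^3) :=
            mul_le_mul_of_nonneg_left hgn (le_of_lt hy0)
        _ = C' * (x - 1) / x^3 := by ring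
        _ ≤ C' / x^2 := by
            rw [div_le_div_iff₀ (by positivity) (by positivity)]
            nlinarith [mul_nonneg hC0 (le_of_lt (mul_pos hx0 hx0))]
    have t3 : |b * (x + (x-1)) / ((x-1) * x^2)| ≤ 4 * |b| / x^2 := by
      rw [abs_div, abs_mul, abs_of_pos (show (0:ℝ) < (x-1)*x^2 by positivity),
        abs_of_pos (show (0:ℝ) < x + (x-1) by linarith)]
      rw [div_le_div_iff₀ (by positivity) (by positivity)]
      nlinarith [mul_nonneg (mul_nonneg (abs_nonneg b) (le_of_lt (mul_pos hx0 hx0)))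
        (show (0:ℝ) ≤ 2*x - 3 by linarith)]
    have habs : |(x - 1) * e1 - (x - 1) * e2 + b * (x + (x-1)) / ((x-1) * x^2)|
        ≤ (x - 1) * |e1| + (x - 1) * |e2| + |b * (x + (x-1)) / ((x-1) * x^2)| := by
      calc |(x - 1) * e1 - (x - 1) * e2 + b * (x + (x-1)) / ((x-1) * x^2)|
          ≤ |(x - 1) * e1 - (x - 1) * e2| + |b * (x + (x-1)) / ((x-1) * x^2)| := abs_add_le _ _
        _ ≤ |(x - 1) * e1| + |(x - 1) * e2| + |b * (x + (x-1)) / ((x-1) * x^2)| := by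
            linarith [abs_sub ((x-1)*e1) ((x-1)*e2)]
        _ = (x - 1) * |e1| + (x - 1) * |e2| + |b * (x + (x-1)) / ((x-1) * x^2)| := by
            rw [abs_mul, abs_mul, abs_of_pos hy0]
    have hnorm : ‖1 / x^2‖ = 1 / x^2 := by
      rw [norm_div, norm_one, norm_pow, Real.norm_eq_abs, abs_of_pos hx0]
    rw [hnorm]
    have hsum : (5 * C' + 4 * |b|) * (1 / x^2)
        = 4 * C' / x^2 + C' / x^2 + 4 * |b| / x^2 := by ring
    rw [hsum]
    linarith
  refine ⟨h1, ?_⟩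
  have h3 : (fun n : ℕ => 1 / (n:ℝ)^3) =O[atTop] fun n : ℕ => 1 / (n:ℝ)^2 := by
    apply isBigO_of_le
    intro n
    rcases Nat.eq_zero_or_pos n with h | h
    · simp [h]
    · have h1 : (1:ℝ) ≤ (n:ℝ) := by exact_mod_cast h
      simp only [norm_div, norm_one, norm_pow, Real.norm_natCast]
      gcongr
      · norm_num
  have hb2 : (fun n : ℕ => b / (n:ℝ)^2) =O[atTop] fun n : ℕ => 1 / (n:ℝ)^2 := by
    have := (isBigO_refl (fun n : ℕ => 1 / (n:ℝ)^2) atTop).const_mul_left b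
    have heq : (fun n : ℕ => b * (1 / (n:ℝ)^2)) = fun n : ℕ => b / (n:ℝ)^2 := by
      funext n; ring
    rwa [heq] at this
  have hfa : (fun n : ℕ => f n - a / (n:ℝ)) =O[atTop] fun n : ℕ => 1 / (n:ℝ)^2 := by
    have h4 := (hf.trans h3).add hb2
    have heq : (fun n : ℕ => f n - (a / n + b / (n:ℝ)^2) + b / (n:ℝ)^2)
        = fun n : ℕ => f n - a / (n:ℝ) := by
      funext n; ring
    rwa [heq] at h4
  have h5 := h1.sub hfa
  have heq : (fun n : ℕ => ((n:ℝ) - 1) * (f (n - 1) - f n) - a / (n:ℝ) - (f n - a / (n:ℝ)))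
      = fun n : ℕ => ((n:ℝ) - 1) * (f (n - 1) - f n) - f n := by
    funext n; ring
  rwa [heq] at h5
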